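/- For every sufficiently large n ∈ ℕ and every convex set A ⊂ ℝ with |A| = n, there exists a matching M ⊂ A × A with |M| ≥ √n such that the restricted difference set A -_M A = {a - b : (a,b) ∈ M} is convex. -/
import Mathlib


/-- Auxiliary index sequence: `cfun t 0 = t`, steps of increasing length. -/
def cfun (t : ℕ) : ℕ → ℕ
  | 0 => t
  | k + 1 => cfun t k + (k + 2)

lemma cfun_zero (t : ℕ) : cfun t 0 = t := rfl
lemma cfun_succ (t k : ℕ) : cfun t (k + 1) = cfun t k + (k + 2) := rfl

lemma cfun_formula (t k : ℕ) : 2 * cfun t k = 2 * t + k * k + 3 * k := by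
  induction k with
  | zero => simp [cfun]
  | succ k ih =>
      have h : (k + 1) * (k + 1) = k * k + 2 * k + 1 := by ring
      rw [cfun_succ]
      omega

lemma cfun_lt_cfun (t : ℕ) {k l : ℕ} (h : k < l) : cfun t k < cfun t l := by
  induction l with
  | zero => omega
  | succ l ih =>
      rcases Nat.lt_succ_iff_lt_or_eq.1 h with h' | h'
      · have := ih h'; rw [cfun_succ]; omega
      · subst h'; rw [cfun_succ]; omega

lemma cfun_le_cfun (t : ℕ) {k l : ℕ} (h : k ≤ l) : cfun t k ≤ cfun t l := by
  rcases Nat.eq_or_lt_of_le h with rfl | h'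
  · exact le_rfl
  · exact (cfun_lt_cfun t h').le

lemma le_cfun (t k : ℕ) : t ≤ cfun t k := by
  have := cfun_formula t k; omega


/-- A finite set `S = {s_1 < ... < s_m} ⊂ ℝ` is convex if its consecutive differences
are strictly increasing. -/
def ConvexFinset (S : Finset ℝ) : Prop :=
  ∀ i : ℕ, ∀ h : i + 2 < S.card,
    (S.orderIsoOfFin rfl ⟨i + 2, h⟩ : ℝ) - (S.orderIsoOfFin rfl ⟨i + 1, by omega⟩ : ℝ) >
    (S.orderIsoOfFin rfl ⟨i + 1, by omega⟩ : ℝ) - (S.orderIsoOfFin rfl ⟨i, by omega⟩ : ℝ)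

/-- `M ⊆ A × A` is a matching if each element of `A` occurs in at most one coordinate of
at most one pair of `M` (in particular the pairs are pairwise disjoint). -/
def IsMatching (A : Finset ℝ) (M : Finset (ℝ × ℝ)) : Prop :=
  (∀ p ∈ M, p.1 ∈ A ∧ p.2 ∈ A ∧ p.1 ≠ p.2) ∧
  (∀ p ∈ M, ∀ q ∈ M, p ≠ q → p.1 ≠ q.1 ∧ p.1 ≠ q.2 ∧ p.2 ≠ q.1 ∧ p.2 ≠ q.2)

/-- for every sufficiently large `n` and every convex `A ⊂ ℝ` with `|A| = n`
there is a matching `M ⊆ A × A` with `|M| ≥ √n` such that `A -_M A` is convex. -/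
theorem statement4 :
    ∃ N : ℕ, ∀ n : ℕ, N ≤ n → ∀ A : Finset ℝ, A.card = n → ConvexFinset A →
      ∃ M : Finset (ℝ × ℝ), IsMatching A M ∧ Real.sqrt n ≤ (M.card : ℝ) ∧
        ConvexFinset (M.image (fun p => p.1 - p.2)) := by
  refine ⟨100, ?_⟩
  intro n hn A hA hconvA
  subst hA
  set s := Nat.sqrt A.card with hs
  set t := s + 1 with ht
  have hs10 : 10 ≤ s := Nat.le_sqrt.2 (by omega)
  have hss : s * s ≤ A.card := Nat.sqrt_le A.card
  -- the increasing enumeration of A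
  set e : Fin A.card ↪o ℝ := A.orderEmbOfFin rfl with he
  set aa : ℕ → ℝ := fun i => if h : i < A.card then e ⟨i, h⟩ else 0 with haa_def
  have haa : ∀ i (h : i < A.card), aa i = e ⟨i, h⟩ := by
    intro i h; simp [haa_def, h]
  have hmono : ∀ i j, i < j → j < A.card → aa i < aa j := by
    intro i j hij hj
    rw [haa i (lt_trans hij hj), haa j hj]
    exact e.strictMono (by exact hij)
  have hmem : ∀ i, i < A.card → aa i ∈ A := by
    intro i h; rw [haa i h]; exact Finset.orderEmbOfFin_mem A rfl _
  have hainj : ∀ i j, i < A.card → j < A.card → i ≠ j → aa i ≠ aa j := by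
    intro i j hi hj hne
    rcases Nat.lt_or_ge i j with h | h
    · exact ne_of_lt (hmono i j h hj)
    · exact ne_of_gt (hmono j i (by omega) hi)
  set gap : ℕ → ℝ := fun i => aa (i + 1) - aa i with hgap_def
  have hgap_pos : ∀ i, i + 1 < A.card → 0 < gap i := by
    intro i h
    have := hmono i (i + 1) (by omega) h
    simp only [hgap_def]; linarith
  have hgap_step : ∀ i, i + 2 < A.card → gap i < gap (i + 1) := by
    intro i h
    have h2 := hconvA i h
    rw [Finset.coe_orderIsoOfFin_apply, Finset.coe_orderIsoOfFin_apply,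
      Finset.coe_orderIsoOfFin_apply] at h2
    simp only [hgap_def]
    rw [haa (i+2) h, haa (i+1) (by omega), haa i (by omega)]
    exact h2
  have hgap_lt : ∀ i j, i < j → j + 1 < A.card → gap i < gap j := by
    intro i j hij
    induction j with
    | zero => omega
    | succ j ih =>
        intro hj
        rcases Nat.lt_succ_iff_lt_or_eq.1 hij with h' | h'
        · exact lt_trans (ih h' (by omega)) (hgap_step j (by omega))
        · subst h'; exact hgap_step i (by omega)
  have hshift : ∀ p m, 1 ≤ m → ∀ q, p + 1 ≤ q → q + m < A.card →
      aa q - aa p < aa (q + m) - aa (p + m) := by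
    intro p m hm q hq
    induction q, hq using Nat.le_induction with
    | base =>
        intro h
        have := hgap_lt p (p + m) (by omega) (by omega)
        simp only [hgap_def] at this
        have he1 : p + 1 + m = p + m + 1 := by omega
        rw [he1]; linarith
    | succ q hq ih =>
        intro h
        have h1 := ih (by omega)
        have h2 := hgap_lt q (q + m) (by omega) (by omega)
        simp only [hgap_def] at h2
        have he1 : q + 1 + m = q + m + 1 := by omega
        rw [he1]; linarith
  -- the index sequence
  set c : ℕ → ℕ := cfun t with hc
  have hcbound : c s < A.card := by
    have hf : 2 * c s = 2 * t + s * s + 3 * s := cfun_formula t s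
    have h6 : 6 * s ≤ s * s := Nat.mul_le_mul_right s (by omega)
    omega
  have hcmax : ∀ k, k < t → c k < A.card :=
    fun k hk => lt_of_le_of_lt (cfun_le_cfun t (by omega)) hcbound
  have htA : t < A.card := lt_of_le_of_lt (le_cfun t s) hcbound
  -- the difference sequence
  set D : ℕ → ℝ := fun k => aa (c k) - aa (t - 1 - k) with hD
  have hD_incr : ∀ k l, k < l → l < t → D k < D l := by
    intro k l hkl hl
    have h1 : aa (c k) < aa (c l) := hmono _ _ (cfun_lt_cfun t hkl) (hcmax l (by omega))
    have h2 : aa (t - 1 - l) < aa (t - 1 - k) := hmono _ _ (by omega) (by omega)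
    simp only [hD]; linarith
  have hDconv : ∀ k, k + 2 < t → D (k + 1) - D k < D (k + 2) - D (k + 1) := by
    intro k hk
    have hc1 : c (k + 1) = c k + (k + 2) := cfun_succ t k
    have hc2 : c (k + 2) = c (k + 1) + (k + 3) := cfun_succ t (k + 1)
    have hck2A : c (k + 2) < A.card := hcmax _ (by omega)
    have hck1A : c (k + 1) + 1 < A.card := by
      have h' : c (k + 1) < c (k + 2) := cfun_lt_cfun t (by omega)
      omega
    -- shift: aa (c (k+1)) - aa (c k) < aa (c (k+2)) - aa (c (k+1) + 1)
    have key1 : aa (c (k + 1)) - aa (c k) <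
        aa (c (k + 1) + (k + 3)) - aa (c k + (k + 3)) := by
      apply hshift (c k) (k + 3) (by omega) (c (k + 1)) (by omega)
      rw [← hc2]; exact hck2A
    rw [show c (k + 1) + (k + 3) = c (k + 2) from hc2.symm,
        show c k + (k + 3) = c (k + 1) + 1 by omega] at key1
    set u := t - 3 - k with hu
    have hu1 : t - 1 - k = u + 2 := by omega
    have hu2 : t - 1 - (k + 1) = u + 1 := by omega
    have hu3 : t - 1 - (k + 2) = u := by omega
    have key2 : gap (u + 1) < gap (c (k + 1)) := by
      apply hgap_lt _ _ _ hck1A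
      have hle : t ≤ c (k + 1) := le_cfun t (k + 1)
      omega
    have key3 : (0:ℝ) < gap u := hgap_pos _ (by omega)
    simp only [hgap_def] at key2 key3
    rw [show u + 1 + 1 = u + 2 by omega] at key2
    simp only [hD, hu1, hu2, hu3]
    linarith
  -- the matching
  set F : ℕ → ℝ × ℝ := fun k => (aa (c k), aa (t - 1 - k)) with hF
  set M : Finset (ℝ × ℝ) := (Finset.range t).image F with hM
  have hFinj : Set.InjOn F (Finset.range t) := by
    intro k hk l hl hkl
    simp only [Finset.coe_range, Set.mem_Iio] at hk hl
    by_contra hne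
    have h1 : aa (c k) ≠ aa (c l) := by
      apply hainj _ _ (hcmax k (by omega)) (hcmax l (by omega))
      intro h
      rcases Nat.lt_or_ge k l with h' | h'
      · exact absurd h (Nat.ne_of_lt (cfun_lt_cfun t h'))
      · rcases Nat.lt_or_ge l k with h'' | h''
        · exact absurd h.symm (Nat.ne_of_lt (cfun_lt_cfun t h''))
        · omega
    exact h1 (congrArg Prod.fst hkl)
  have hMcard : M.card = t := by
    rw [hM, Finset.card_image_of_injOn hFinj, Finset.card_range]
  refine ⟨M, ⟨?_, ?_⟩, ?_, ?_⟩
  · -- membership part of matching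
    intro p hp
    simp only [hM, Finset.mem_image, Finset.mem_range] at hp
    obtain ⟨k, hk, rfl⟩ := hp
    have h1 : c k < A.card := hcmax k (by omega)
    have h2 : t - 1 - k < A.card := by omega

    refine ⟨hmem _ h1, hmem _ h2, ?_⟩
    have hck : t ≤ c k := le_cfun t k
    exact hainj _ _ h1 h2 (by omega)
  · -- disjointness part
    intro p hp q hq hpq
    simp only [hM, Finset.mem_image, Finset.mem_range] at hp hq
    obtain ⟨k, hk, rfl⟩ := hp
    obtain ⟨l, hl, rfl⟩ := hq
    have hkl : k ≠ l := by rintro rfl; exact hpq rfl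
    have hckA : c k < A.card := hcmax k (by omega)
    have hclA : c l < A.card := hcmax l (by omega)
    have hdkA : t - 1 - k < A.card := by omega
    have hdlA : t - 1 - l < A.card := by omega
    have hck : t ≤ c k := le_cfun t k
    have hcl : t ≤ c l := le_cfun t l
    have hcc : c k ≠ c l := by
      rcases Nat.lt_or_ge k l with h' | h'
      · exact Nat.ne_of_lt (cfun_lt_cfun t h')
      · exact (Nat.ne_of_lt (cfun_lt_cfun t (by omega))).symm
    exact ⟨hainj _ _ hckA hclA hcc,
      hainj _ _ hckA hdlA (by omega),
      hainj _ _ hdkA hclA (by omega),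
      hainj _ _ hdkA hdlA (by omega)⟩
  · -- cardinality
    rw [hMcard]
    have h2 : A.card ≤ t * t := by
      have h := Nat.lt_succ_sqrt A.card
      have heq : t = Nat.succ (Nat.sqrt A.card) := by rw [ht, hs]
      rw [heq]; omega
    have h1 : (A.card : ℝ) ≤ (t : ℝ) ^ 2 := by rw [sq]; exact_mod_cast h2
    calc Real.sqrt A.card ≤ Real.sqrt ((t:ℝ)^2) := Real.sqrt_le_sqrt h1
      _ = t := Real.sqrt_sq (by positivity)
  · -- convexity of the difference set
    have himg : M.image (fun p => p.1 - p.2) = (Finset.range t).image D := by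
      rw [hM, Finset.image_image]
      rfl
    rw [himg]
    set T : Finset ℝ := (Finset.range t).image D with hT
    have hTcard : T.card = t := by
      rw [hT, Finset.card_image_of_injOn, Finset.card_range]
      intro k hk l hl hkl
      simp only [Finset.coe_range, Set.mem_Iio] at hk hl
      by_contra hne
      rcases Nat.lt_or_ge k l with h' | h'
      · exact absurd hkl (ne_of_lt (hD_incr k l h' hl))
      · exact absurd hkl.symm (ne_of_lt (hD_incr l k (by omega) hk))
    have hfT : (fun j : Fin T.card => D (j : ℕ)) = T.orderEmbOfFin rfl := by
      apply Finset.orderEmbOfFin_unique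
      · intro x
        have hx := x.isLt
        exact Finset.mem_image_of_mem D (Finset.mem_range.2 (by omega))
      · intro a b hab
        have hb := b.isLt
        exact hD_incr a b hab (by omega)
    intro i hi
    rw [Finset.coe_orderIsoOfFin_apply, Finset.coe_orderIsoOfFin_apply,
      Finset.coe_orderIsoOfFin_apply, ← hfT]
    exact hDconv i (by have := hi; omega)
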